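/- The Σ-product Σ(2^κ) = {x ∈ 2^κ : x has countable support}, as a subspace of the product 2^κ, is countably compact but not compact, for every uncountable cardinal κ. -/

import Mathlib

open Cardinal Set Topology

universe u

/-- A free sequence of length `o` in the topology `t`: a transfinite sequence indexed by
the ordinals below `o` such that every initial segment's closure is disjoint from the
closure of the corresponding final segment. -/
def IsFreeSeqOn {X : Type u} (t : TopologicalSpace X) (o : Ordinal.{u})
    (x : {α : Ordinal.{u} // α < o} → X) : Prop :=
  ∀ i : {α : Ordinal.{u} // α < o},
    @closure X t (x '' {j | j < i}) ∩ @closure X t (x '' {j | i ≤ j}) = ∅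

/-- The tightness of a topology: the least infinite cardinal `κ` such that whenever a
point is in the closure of a set `A`, it is in the closure of a subset of `A` of
cardinality at most `κ`. -/
noncomputable def tightnessOf {X : Type u} (t : TopologicalSpace X) : Cardinal.{u} :=
  sInf {κ : Cardinal.{u} | ℵ₀ ≤ κ ∧ ∀ (A : Set X) (p : X), p ∈ @closure X t A →
    ∃ B ⊆ A, #↥B ≤ κ ∧ p ∈ @closure X t B}

/-- The Lindelöf number: the least infinite cardinal `κ` such that every open cover has
a subcover of cardinality at most `κ`. -/
noncomputable def lindelofNumberOf {X : Type u} (t : TopologicalSpace X) : Cardinal.{u} :=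
  sInf {κ : Cardinal.{u} | ℵ₀ ≤ κ ∧ ∀ 𝒰 : Set (Set X), (∀ U ∈ 𝒰, @IsOpen X t U) →
    ⋃₀ 𝒰 = Set.univ → ∃ 𝒱 ⊆ 𝒰, #↥𝒱 ≤ κ ∧ ⋃₀ 𝒱 = Set.univ}

/-- `F(X)`: the supremum of the cardinalities (lengths) of free sequences, at least ℵ₀. -/
noncomputable def freeNumberOf {X : Type u} (t : TopologicalSpace X) : Cardinal.{u} :=
  ℵ₀ ⊔ sSup {c : Cardinal.{u} |
    ∃ x : {α : Ordinal.{u} // α < c.ord} → X, IsFreeSeqOn t c.ord x}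

/-- The G_δ-modification: the topology generated by the G_δ-subsets. -/
def gDelta {X : Type u} (t : TopologicalSpace X) : TopologicalSpace X :=
  TopologicalSpace.generateFrom {s : Set X | @IsGδ X t s}

/-- `Cl_κ`-Lindelöf: every open `Cl_κ`-cover of any subset `W` contains a countable
subfamily covering `W`. -/
def ClLindelofOf {X : Type u} (t : TopologicalSpace X) (κ : Cardinal.{u}) : Prop :=
  ∀ (W : Set X) (𝒰 : Set (Set X)), (∀ U ∈ 𝒰, @IsOpen X t U) →
    (∀ C ⊆ W, #↥C ≤ κ → ∃ U ∈ 𝒰, @closure X t C ⊆ U) →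
    ∃ 𝒱 ⊆ 𝒰, 𝒱.Countable ∧ W ⊆ ⋃₀ 𝒱

/-- for uncountable `κ`, the Σ-product `Σ(2^κ)` is countably compact but
not compact. -/
theorem statement16 {ι : Type u} (hι : ℵ₀ < #ι) :
    (∀ 𝒰 : Set (Set {x : ι → Bool // (x ⁻¹' {true}).Countable}), 𝒰.Countable →
      (∀ U ∈ 𝒰, IsOpen U) → ⋃₀ 𝒰 = Set.univ →
      ∃ 𝒱 ⊆ 𝒰, 𝒱.Finite ∧ ⋃₀ 𝒱 = Set.univ) ∧
    ¬CompactSpace {x : ι → Bool // (x ⁻¹' {true}).Countable} := by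
  classical
  have hXne : Nonempty {x : ι → Bool // (x ⁻¹' {true}).Countable} := by
    refine ⟨⟨fun _ => false, ?_⟩⟩
    have : ((fun _ : ι => false) ⁻¹' {true}) = ∅ := by ext i; simp
    rw [this]; exact countable_empty
  constructor
  · intro 𝒰 hcount hopen hcover
    by_contra hno
    push_neg at hno
    have h𝒰ne : 𝒰.Nonempty := by
      rcases Set.eq_empty_or_nonempty 𝒰 with h | h
      · exfalso
        rw [h, Set.sUnion_empty] at hcover
        exact Set.empty_ne_univ hcover
      · exact h
    obtain ⟨U, hU⟩ := hcount.exists_eq_range h𝒰ne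
    have hUopen : ∀ k, IsOpen (U k) := fun k => hopen _ (hU ▸ Set.mem_range_self k)
    have hstep : ∀ n : ℕ, ∃ y, y ∉ ⋃ k ∈ Finset.range (n + 1), U k := by
      intro n
      by_contra h
      push_neg at h
      refine hno (U '' ↑(Finset.range (n + 1))) ?_ ?_ ?_
      · rw [hU]; exact Set.image_subset_range _ _
      · exact (Finset.range (n + 1)).finite_toSet.image U
      · rw [Set.sUnion_image]
        exact Set.eq_univ_iff_forall.mpr fun y => by
          simpa using (Set.mem_iUnion₂.mp (h y))
    choose x hx using hstep
    set A : Set ι := ⋃ n, (((x n : {x : ι → Bool // (x ⁻¹' {true}).Countable}) : ι → Bool) ⁻¹' {true}) with hA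
    have hAc : A.Countable := Set.countable_iUnion fun n => (x n).2
    set C : Set (ι → Bool) := {y | ∀ i ∉ A, y i = false} with hCdef
    have hCclosed : IsClosed C := by
      have : C = ⋂ i ∈ Aᶜ, {y : ι → Bool | y i = false} := by
        ext y; simp [hCdef, Set.mem_compl_iff]
      rw [this]
      exact isClosed_biInter fun i _ => isClosed_eq (continuous_apply i) continuous_const
    have hCcomp : IsCompact C := hCclosed.isCompact
    have hCsub : C ⊆ {y : ι → Bool | (y ⁻¹' {true}).Countable} := by
      intro y hy
      refine hAc.mono ?_
      intro i hi
      by_contra h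
      have := hy i h
      simp only [Set.mem_preimage, Set.mem_singleton_iff] at hi
      rw [this] at hi
      exact Bool.false_ne_true hi
    have hKcomp : IsCompact (Subtype.val ⁻¹' C :
        Set {x : ι → Bool // (x ⁻¹' {true}).Countable}) := by
      rw [Topology.IsEmbedding.subtypeVal.isCompact_iff]
      have heq : Subtype.val '' (Subtype.val ⁻¹' C :
          Set {x : ι → Bool // (x ⁻¹' {true}).Countable}) = C := by
        ext y
        constructor
        · rintro ⟨z, hz, rfl⟩; exact hz
        · intro hy; exact ⟨⟨y, hCsub hy⟩, hy, rfl⟩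
      rw [heq]; exact hCcomp
    have hxK : ∀ n, x n ∈ (Subtype.val ⁻¹' C :
        Set {x : ι → Bool // (x ⁻¹' {true}).Countable}) := by
      intro n
      intro i hi
      cases h : ((x n : {x : ι → Bool // (x ⁻¹' {true}).Countable}) : ι → Bool) i with
      | false => rfl
      | true =>
        exfalso
        exact hi (Set.mem_iUnion.mpr ⟨n, by simp [Set.mem_preimage, h]⟩)
    have hle : Filter.map x Filter.atTop ≤ Filter.principal (Subtype.val ⁻¹' C) := by
      rw [Filter.le_principal_iff, Filter.mem_map]
      exact Filter.Eventually.of_forall hxK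
    obtain ⟨p, _, hp⟩ := hKcomp.exists_clusterPt hle
    have hpU : ∃ m, p ∈ U m := by
      have hpu : p ∈ ⋃₀ 𝒰 := hcover ▸ Set.mem_univ p
      rw [hU] at hpu
      rcases hpu with ⟨V, ⟨m, rfl⟩, hpV⟩
      exact ⟨m, hpV⟩
    obtain ⟨m, hpm⟩ := hpU
    have hmp : MapClusterPt p Filter.atTop x := hp
    have hfreq : ∃ᶠ n in Filter.atTop, x n ∈ U m :=
      (mapClusterPt_iff_frequently.mp hmp) (U m) ((hUopen m).mem_nhds hpm)
    obtain ⟨n, hnm, hn⟩ := Filter.frequently_atTop.mp hfreq m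
    exact hx n (Set.mem_biUnion (Finset.mem_range.mpr (Nat.lt_succ_of_le hnm)) hn)
  · intro hcomp
    set S : Set (ι → Bool) := {x | (x ⁻¹' {true}).Countable} with hSdef
    have hScomp : IsCompact S := isCompact_iff_compactSpace.mpr hcomp
    have hclosed : IsClosed S := hScomp.isClosed
    have hnotin : (fun _ : ι => true) ∉ S := by
      intro h
      have hpre : ((fun _ : ι => true) ⁻¹' {true}) = Set.univ := by ext i; simp
      rw [hSdef, Set.mem_setOf_eq, hpre] at h
      have : Countable ι := Set.countable_univ_iff.mp h
      exact absurd (Cardinal.mk_le_aleph0_iff.mpr this) (not_le.mpr hι)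
    have hmem : (fun _ : ι => true) ∈ closure S := by
      rw [mem_closure_iff_nhds]
      intro t ht
      rw [nhds_pi] at ht
      obtain ⟨I, hI, s, hs, hsub⟩ := Filter.mem_pi.mp ht
      refine ⟨fun i => if i ∈ I then true else false, hsub ?_, ?_⟩
      · intro i hi
        simp only [if_pos hi]
        exact mem_of_mem_nhds (hs i)
      · show ((fun i => if i ∈ I then true else false) ⁻¹' {true}).Countable
        refine hI.countable.mono ?_
        intro i hi
        simp only [Set.mem_preimage, Set.mem_singleton_iff] at hi
        by_contra h
        rw [if_neg h] at hi
        exact Bool.false_ne_true hi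
    rw [hclosed.closure_eq] at hmem
    exact hnotin hmem
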